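/- Let (σ_u) be a family of Möbius involutions of the Riemann sphere, parametrized by a small complex parameter u, and suppose there exist families of points α(u), ζ(u), ω(u) ∈ ℂ̄ with: σ_u(ζ(u)) = ζ(u), σ_u(α(u)) = ω(u), ζ(u) → 0, α(u) = o(ζ(u)), and ζ(u) = o(ω(u)) as u → 0. Then for any fixed c ∈ ℂ∖{0} and any family z_u = c·ζ(u)(1+o(1)), one has σ_u(z_u) = c^{−1}·ζ(u)(1+o(1)) as u → 0. -/

import Mathlib

open Filter Asymptotics

set_option maxHeartbeats 1000000

lemma key_pointwise13 (c₀ : ℂ) (hc₀ : c₀ ≠ 0) (ε : ℝ) (hε : 0 < ε) :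
    ∃ δ : ℝ, 0 < δ ∧ ∀ a b cc d α ζ ω z : ℂ,
      a * d - b * cc ≠ 0 → a + d = 0 →
      a * ζ + b = ζ * (cc * ζ + d) →
      a * α + b = ω * (cc * α + d) →
      ‖α‖ ≤ δ * ‖ζ‖ → ‖ζ‖ ≤ δ * ‖ω‖ → ‖z - c₀ * ζ‖ ≤ δ * ‖ζ‖ →
      ‖(a * z + b) / (cc * z + d) - c₀⁻¹ * ζ‖ ≤ ε * ‖ζ‖ := by
  have hc₀' : 0 < ‖c₀‖ := norm_pos_iff.mpr hc₀
  set K : ℝ := 4 * (3 + ‖c₀‖ + ‖c₀‖⁻¹) + ‖c₀‖⁻¹ with hK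
  have hKpos : 0 < K := by positivity
  refine ⟨min (min (1/5) (‖c₀‖/10)) (min 1 (ε * ‖c₀‖ / (2 * K))), by positivity, ?_⟩
  set δ : ℝ := min (min (1/5) (‖c₀‖/10)) (min 1 (ε * ‖c₀‖ / (2 * K))) with hδdef
  intro a b cc d α ζ ω z hdet htr hfix hmap hα hζω hz
  have hδpos : 0 < δ := by positivity
  have hδ1 : δ ≤ 1/5 := le_trans (min_le_left _ _) (min_le_left _ _)
  have hδ2 : δ ≤ ‖c₀‖/10 := le_trans (min_le_left _ _) (min_le_right _ _)
  have hδ3 : δ ≤ 1 := le_trans (min_le_right _ _) (min_le_left _ _)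
  have hδ4 : δ ≤ ε * ‖c₀‖ / (2 * K) := le_trans (min_le_right _ _) (min_le_right _ _)
  have hd : d = -a := by linear_combination htr
  subst hd
  by_cases hζ : ζ = 0
  · subst hζ
    have hα0 : α = 0 := by
      have : ‖α‖ ≤ 0 := by simpa using hα
      simpa using le_antisymm this (norm_nonneg _)
    have hz0 : z = 0 := by
      have : ‖z‖ ≤ 0 := by simpa using hz
      simpa using le_antisymm this (norm_nonneg _)
    have hb0 : b = 0 := by linear_combination hfix
    subst hα0; subst hz0; subst hb0
    simp
  · have hζpos : 0 < ‖ζ‖ := norm_pos_iff.mpr hζ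
    have hb : b = cc * ζ^2 - 2 * a * ζ := by linear_combination hfix
    have hω : ω ≠ 0 := by
      intro h; apply hζ
      rw [h] at hζω
      simp only [norm_zero, mul_zero] at hζω
      exact norm_eq_zero.mp (le_antisymm hζω (norm_nonneg _))
    have hωpos : 0 < ‖ω‖ := norm_pos_iff.mpr hω
    by_cases hcc : cc = 0
    · exfalso
      subst hcc
      have ha0 : a ≠ 0 := by
        intro h; apply hdet; rw [h]; ring
      have hωeq : ω = 2 * ζ - α := by
        have key : a * (α - 2*ζ + ω) = 0 := by linear_combination hmap - hfix
        have := (mul_eq_zero.mp key).resolve_left ha0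
        linear_combination this
      have h1 : ‖ω‖ ≤ 2 * ‖ζ‖ + ‖α‖ := by
        rw [hωeq]
        calc ‖2 * ζ - α‖ ≤ ‖2 * ζ‖ + ‖α‖ := norm_sub_le _ _
          _ = 2 * ‖ζ‖ + ‖α‖ := by rw [norm_mul]; norm_num
      nlinarith [norm_nonneg α, norm_nonneg ω]
    · have hccpos : 0 < ‖cc‖ := norm_pos_iff.mpr hcc
      have key : a * (α - 2*ζ + ω) = cc * (ω * α - ζ^2) := by
        linear_combination hmap - hfix
      -- lower bound on |α - 2ζ + ω|
      have hαω : ‖α‖ ≤ δ * (δ * ‖ω‖) := le_trans hα (by nlinarith)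
      have h1 : ‖ω‖/2 ≤ ‖α - 2*ζ + ω‖ := by
        have e : α - 2*ζ + ω = ω - (2*ζ - α) := by ring
        rw [e]
        have h2 : ‖2*ζ - α‖ ≤ 2*‖ζ‖ + ‖α‖ := by
          calc ‖2*ζ - α‖ ≤ ‖2*ζ‖ + ‖α‖ := norm_sub_le _ _
            _ = 2*‖ζ‖ + ‖α‖ := by rw [norm_mul]; norm_num
        have h3 : ‖ω‖ - ‖2*ζ - α‖ ≤ ‖ω - (2*ζ - α)‖ := by
          have := norm_sub_norm_le ω (2*ζ - α)
          linarith [this]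
        nlinarith [norm_nonneg α]
      have ha : ‖a‖ ≤ 4 * δ * ‖cc‖ * ‖ζ‖ := by
        have h2 : ‖a‖ * ‖α - 2*ζ + ω‖ = ‖cc‖ * ‖ω * α - ζ^2‖ := by
          rw [← norm_mul, ← norm_mul, key]
        have h3 : ‖ω * α - ζ^2‖ ≤ 2 * δ * ‖ω‖ * ‖ζ‖ := by
          calc ‖ω * α - ζ^2‖ ≤ ‖ω * α‖ + ‖ζ^2‖ := norm_sub_le _ _
            _ = ‖ω‖ * ‖α‖ + ‖ζ‖^2 := by rw [norm_mul, norm_pow]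
            _ ≤ ‖ω‖ * (δ * ‖ζ‖) + (δ * ‖ω‖) * ‖ζ‖ := by nlinarith
            _ = 2 * δ * ‖ω‖ * ‖ζ‖ := by ring
        nlinarith [norm_nonneg a, norm_nonneg (α - 2*ζ + ω)]
      -- denominator bound
      have hzlb : ‖c₀‖ * ‖ζ‖ - δ * ‖ζ‖ ≤ ‖z‖ := by
        have h6 := norm_sub_le z (z - c₀ * ζ)
        simp only [sub_sub_cancel] at h6
        have h4 : ‖c₀ * ζ‖ = ‖c₀‖ * ‖ζ‖ := norm_mul _ _
        linarith
      have hD : ‖cc‖ * ‖ζ‖ * (‖c₀‖/2) ≤ ‖cc * z + -a‖ := by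
        have h5 : ‖cc * z‖ - ‖a‖ ≤ ‖cc * z + -a‖ := by
          have := norm_sub_norm_le (cc * z) a
          have e : cc * z - a = cc * z + -a := by ring
          rw [e] at this; linarith
        rw [norm_mul] at h5
        have h6 : ‖cc‖ * (‖c₀‖ * ‖ζ‖ - δ * ‖ζ‖) ≤ ‖cc‖ * ‖z‖ :=
          mul_le_mul_of_nonneg_left hzlb hccpos.le
        have h7 : (5*δ) * (‖cc‖ * ‖ζ‖) ≤ (‖c₀‖/2) * (‖cc‖ * ‖ζ‖) := by
          apply mul_le_mul_of_nonneg_right (by linarith) (by positivity)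
        nlinarith
      have hDne : cc * z + -a ≠ 0 := by
        intro h
        rw [h, norm_zero] at hD
        nlinarith [mul_pos (mul_pos hccpos hζpos) (half_pos hc₀')]
      -- rewrite the expression
      have hE : (a * z + b) / (cc * z + -a) - c₀⁻¹ * ζ
          = ((a * z + b) - c₀⁻¹ * ζ * (cc * z + -a)) / (cc * z + -a) := by
        rw [eq_div_iff hDne, sub_mul, div_mul_cancel₀ _ hDne]
      have hNeq : (a * z + b) - c₀⁻¹ * ζ * (cc * z + -a)
          = a * (z - 2*ζ + c₀⁻¹ * ζ) - cc * ζ * (c₀⁻¹ * (z - c₀ * ζ)) := by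
        have h1 : c₀ * c₀⁻¹ = 1 := mul_inv_cancel₀ hc₀
        linear_combination hb - cc * ζ^2 * h1
      have hinv : ‖(c₀⁻¹ : ℂ)‖ = ‖c₀‖⁻¹ := norm_inv c₀
      have hz2 : ‖z - 2*ζ + c₀⁻¹*ζ‖ ≤ (3 + ‖c₀‖ + ‖c₀‖⁻¹) * ‖ζ‖ := by
        have e : z - 2*ζ + c₀⁻¹*ζ = (z - c₀*ζ) + (c₀*ζ + (-2)*ζ + c₀⁻¹*ζ) := by ring
        rw [e]
        have t1 : ‖c₀*ζ + (-2:ℂ)*ζ + c₀⁻¹*ζ‖ ≤ ‖c₀*ζ‖ + ‖(-2:ℂ)*ζ‖ + ‖c₀⁻¹*ζ‖ :=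
          norm_add₃_le
        have t2 : ‖c₀*ζ‖ = ‖c₀‖ * ‖ζ‖ := norm_mul _ _
        have t3 : ‖(-2:ℂ)*ζ‖ = 2 * ‖ζ‖ := by rw [norm_mul]; norm_num
        have t4 : ‖c₀⁻¹*ζ‖ = ‖c₀‖⁻¹ * ‖ζ‖ := by rw [norm_mul, hinv]
        calc ‖(z - c₀*ζ) + (c₀*ζ + (-2:ℂ)*ζ + c₀⁻¹*ζ)‖
            ≤ ‖z - c₀*ζ‖ + ‖c₀*ζ + (-2:ℂ)*ζ + c₀⁻¹*ζ‖ := norm_add_le _ _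
          _ ≤ (3 + ‖c₀‖ + ‖c₀‖⁻¹) * ‖ζ‖ := by
              rw [t2, t3, t4] at t1; nlinarith
      have hN : ‖(a * z + b) - c₀⁻¹ * ζ * (cc * z + -a)‖ ≤ δ * K * ‖cc‖ * ‖ζ‖^2 := by
        rw [hNeq]
        calc ‖a * (z - 2*ζ + c₀⁻¹ * ζ) - cc * ζ * (c₀⁻¹ * (z - c₀ * ζ))‖
            ≤ ‖a * (z - 2*ζ + c₀⁻¹ * ζ)‖ + ‖cc * ζ * (c₀⁻¹ * (z - c₀ * ζ))‖ :=
              norm_sub_le _ _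
          _ = ‖a‖ * ‖z - 2*ζ + c₀⁻¹ * ζ‖ + ‖cc‖ * ‖ζ‖ * (‖c₀‖⁻¹ * ‖z - c₀ * ζ‖) := by
              rw [norm_mul, norm_mul, norm_mul, norm_mul, hinv]
          _ ≤ (4*δ*‖cc‖*‖ζ‖) * ((3 + ‖c₀‖ + ‖c₀‖⁻¹) * ‖ζ‖)
                + ‖cc‖ * ‖ζ‖ * (‖c₀‖⁻¹ * (δ * ‖ζ‖)) := by
              have i1 : (0:ℝ) ≤ ‖c₀‖⁻¹ := by positivity
              have t1 := mul_le_mul ha hz2 (norm_nonneg _) (by positivity)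
              have t2 : ‖cc‖ * ‖ζ‖ * (‖c₀‖⁻¹ * ‖z - c₀ * ζ‖)
                  ≤ ‖cc‖ * ‖ζ‖ * (‖c₀‖⁻¹ * (δ * ‖ζ‖)) := by
                apply mul_le_mul_of_nonneg_left _ (by positivity)
                exact mul_le_mul_of_nonneg_left hz i1
              exact add_le_add t1 t2
          _ = δ * K * ‖cc‖ * ‖ζ‖^2 := by rw [hK]; ring
      rw [hE, norm_div]
      have hδK : δ * K ≤ ε * ‖c₀‖ / 2 := by
        have h8 := mul_le_mul_of_nonneg_right hδ4 hKpos.le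
        have h9 : (ε * ‖c₀‖ / (2*K)) * K = ε * ‖c₀‖ / 2 := by
          field_simp
        linarith
      have hfinal : ‖(a * z + b) - c₀⁻¹ * ζ * (cc * z + -a)‖ / ‖cc * z + -a‖
          ≤ (δ * K * ‖cc‖ * ‖ζ‖^2) / (‖cc‖ * ‖ζ‖ * (‖c₀‖/2)) :=
        div_le_div₀ (by positivity) hN (by positivity) hD
      have hstep : (δ * K * ‖cc‖ * ‖ζ‖^2) / (‖cc‖ * ‖ζ‖ * (‖c₀‖/2)) ≤ ε * ‖ζ‖ := by
        rw [div_le_iff₀ (by positivity)]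
        nlinarith [mul_le_mul_of_nonneg_right hδK
          (by positivity : (0:ℝ) ≤ ‖cc‖ * ‖ζ‖^2)]
      exact le_trans hfinal hstep


/-- Let `σ_u(z) = (a(u)z + b(u))/(c(u)z + d(u))` be a family of nontrivial
Möbius involutions (trace `a + d = 0`, determinant `ad − bc ≠ 0`) of the Riemann sphere,
with fixed points `ζ(u)` and `σ_u(α(u)) = ω(u)`, where `ζ(u) → 0`, `α(u) = o(ζ(u))` and
`ζ(u) = o(ω(u))`. Then for any `c₀ ≠ 0` and any family `z_u = c₀·ζ(u)(1+o(1))`, one has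
`σ_u(z_u) = c₀⁻¹·ζ(u)(1+o(1))`. -/
theorem degenerating_involutions_invert_factor {ι : Type*} (l : Filter ι)
    (a b cc d : ι → ℂ)
    (hdet : ∀ u, a u * d u - b u * cc u ≠ 0)
    (htr : ∀ u, a u + d u = 0)
    (α ζ ω : ι → ℂ)
    (hfix : ∀ u, a u * ζ u + b u = ζ u * (cc u * ζ u + d u))
    (hmap : ∀ u, a u * α u + b u = ω u * (cc u * α u + d u))
    (hζ0 : Tendsto ζ l (nhds 0))
    (hαζ : α =o[l] ζ) (hζω : ζ =o[l] ω)
    (c₀ : ℂ) (hc₀ : c₀ ≠ 0) (z : ι → ℂ)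
    (hz : (fun u => z u - c₀ * ζ u) =o[l] ζ) :
    (fun u => (a u * z u + b u) / (cc u * z u + d u) - c₀⁻¹ * ζ u) =o[l] ζ := by
  rw [isLittleO_iff]
  intro ε hε
  obtain ⟨δ, hδ, H⟩ := key_pointwise13 c₀ hc₀ ε hε
  filter_upwards [hαζ.def hδ, hζω.def hδ, hz.def hδ] with u h1 h2 h3
  exact H (a u) (b u) (cc u) (d u) (α u) (ζ u) (ω u) (z u) (hdet u) (htr u)
    (hfix u) (hmap u) h1 h2 h3
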